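/- For every a ≥ 0, every ε > 0, and every q > 1, one has (1+a)^q ≤ (1+ε) a^q + (1 - (1+ε)^{-1/(q-1)})^{1-q}. -/

import Mathlib

open Real

theorem one_add_pow_le (a ε q : ℝ) (ha : 0 ≤ a) (hε : 0 < ε) (hq : 1 < q) :
    (1 + a) ^ q ≤ (1 + ε) * a ^ q + (1 - (1 + ε) ^ (-(1/(q-1)))) ^ (1 - q) := by
  set δ := (1 + ε) ^ (-(1/(q-1))) with hδdef
  have h1ε : (1:ℝ) < 1 + ε := by linarith
  have hεpos : (0:ℝ) < 1 + ε := by linarith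
  have hδpos : 0 < δ := Real.rpow_pos_of_pos hεpos _
  have hqi : 0 < q - 1 := by linarith
  have hδlt : δ < 1 :=
    Real.rpow_lt_one_of_one_lt_of_neg h1ε (by
      have : 0 < 1/(q-1) := by positivity
      linarith)
  have h1δ : 0 < 1 - δ := by linarith
  -- δ^(1-q) = 1 + ε
  have hkey : δ ^ (1 - q) = 1 + ε := by
    rw [hδdef, ← Real.rpow_mul hεpos.le]
    have : -(1/(q-1)) * (1-q) = 1 := by field_simp; ring
    rw [this, Real.rpow_one]
  -- convexity
  have hconv := (convexOn_rpow hq.le).2 (x := a/δ) (y := 1/(1-δ))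
    (by exact Set.mem_Ici.2 (by positivity))
    (by exact Set.mem_Ici.2 (by positivity))
    hδpos.le h1δ.le (by ring)
  simp only [smul_eq_mul] at hconv
  have hcomb : δ * (a/δ) + (1-δ) * (1/(1-δ)) = 1 + a := by
    field_simp
    ring
  rw [hcomb] at hconv
  have h1 : δ * (a/δ) ^ q = (1+ε) * a ^ q := by
    rw [Real.div_rpow ha hδpos.le, ← hkey, Real.rpow_sub hδpos, Real.rpow_one]
    have := Real.rpow_pos_of_pos hδpos q
    field_simp
  have h2 : (1-δ) * (1/(1-δ)) ^ q = (1-δ) ^ (1-q) := by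
    rw [Real.div_rpow zero_le_one h1δ.le, Real.one_rpow,
      Real.rpow_sub h1δ, Real.rpow_one]
    field_simp
  rw [h1, h2] at hconv
  exact hconv
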